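/- For a semicopula S, the inequality I_S(μ, (f+a)·1_A) ≤ I_S(μ, f·1_A) + min(a, μ(A)) holds for all a ∈ [0,1], measurable A, capacities μ, and measurable f with f + a ∈ [0,1], if and only if S(x+y, z) ≤ S(x, z) + min(y, z) for all x, y, z ∈ [0,1] with x + y ≤ 1. -/
import Mathlib

open Set

def Semicopula (S : ℝ → ℝ → ℝ) : Prop :=
  (∀ x ∈ Icc (0:ℝ) 1, ∀ y ∈ Icc (0:ℝ) 1, S x y ∈ Icc (0:ℝ) 1) ∧
  (∀ x ∈ Icc (0:ℝ) 1, ∀ y ∈ Icc (0:ℝ) 1, ∀ y' ∈ Icc (0:ℝ) 1, y ≤ y' → S x y ≤ S x y') ∧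
  (∀ y ∈ Icc (0:ℝ) 1, ∀ x ∈ Icc (0:ℝ) 1, ∀ x' ∈ Icc (0:ℝ) 1, x ≤ x' → S x y ≤ S x' y) ∧
  (∀ x ∈ Icc (0:ℝ) 1, S x 1 = x ∧ S 1 x = x)

def Capacity {X : Type} (μ : Set X → ℝ) : Prop :=
  (∀ A : Set X, μ A ∈ Icc (0:ℝ) 1) ∧ (∀ A B : Set X, A ⊆ B → μ A ≤ μ B) ∧
  μ (∅ : Set X) = 0 ∧ μ (univ : Set X) = 1

noncomputable def genInt {X : Type} (S : ℝ → ℝ → ℝ) (μ : Set X → ℝ) (f : X → ℝ) : ℝ :=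
  ⨆ t : Icc (0:ℝ) 1, S (t:ℝ) (μ {x | (t:ℝ) ≤ f x})

def Comonotone {X : Type} (f g : X → ℝ) : Prop :=
  ∀ x y, 0 ≤ (f x - f y) * (g x - g y)

def Tcoseminorm (op : ℝ → ℝ → ℝ) : Prop :=
  ∃ S : ℝ → ℝ → ℝ, Semicopula S ∧
    ∀ x ∈ Icc (0:ℝ) 1, ∀ y ∈ Icc (0:ℝ) 1, op x y = 1 - S (1 - x) (1 - y)


section Helpers

variable {S : ℝ → ℝ → ℝ}

private lemma scop_mem (hS : Semicopula S) {x y : ℝ} (hx : x ∈ Icc (0:ℝ) 1)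
    (hy : y ∈ Icc (0:ℝ) 1) : S x y ∈ Icc (0:ℝ) 1 := hS.1 x hx y hy

private lemma S_zero_left (hS : Semicopula S) {z : ℝ} (hz : z ∈ Icc (0:ℝ) 1) : S 0 z = 0 := by
  have h1 : S 0 z ≤ S 0 1 :=
    hS.2.1 0 ⟨le_rfl, zero_le_one⟩ z hz 1 ⟨zero_le_one, le_rfl⟩ hz.2
  have h2 : S 0 1 = 0 := (hS.2.2.2 0 ⟨le_rfl, zero_le_one⟩).1
  have h3 := (scop_mem hS ⟨le_rfl, zero_le_one⟩ hz).1
  linarith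

private lemma S_zero_right (hS : Semicopula S) {t : ℝ} (ht : t ∈ Icc (0:ℝ) 1) : S t 0 = 0 := by
  have h1 : S t 0 ≤ S 1 0 :=
    hS.2.2.1 0 ⟨le_rfl, zero_le_one⟩ t ht 1 ⟨zero_le_one, le_rfl⟩ ht.2
  have h2 : S 1 0 = 0 := (hS.2.2.2 0 ⟨le_rfl, zero_le_one⟩).2
  have h3 := (scop_mem hS ht ⟨le_rfl, zero_le_one⟩).1
  linarith

private lemma genInt_le {X : Type} {μ : Set X → ℝ} (f : X → ℝ) {c : ℝ}
    (h : ∀ t : Icc (0:ℝ) 1, S (t:ℝ) (μ {x | (t:ℝ) ≤ f x}) ≤ c) : genInt S μ f ≤ c := by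
  haveI : Nonempty (Icc (0:ℝ) 1) := ⟨⟨0, le_rfl, zero_le_one⟩⟩
  exact ciSup_le h

private lemma le_genInt {X : Type} (hS : Semicopula S) {μ : Set X → ℝ} (hμ : Capacity μ)
    (f : X → ℝ) (t : Icc (0:ℝ) 1) :
    S (t:ℝ) (μ {x | (t:ℝ) ≤ f x}) ≤ genInt S μ f := by
  apply le_ciSup (f := fun t : Icc (0:ℝ) 1 => S (t:ℝ) (μ {x | (t:ℝ) ≤ f x}))
  refine ⟨1, ?_⟩
  rintro _ ⟨u, rfl⟩
  exact (scop_mem hS u.2 (hμ.1 _)).2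

private lemma genInt_nonneg {X : Type} (hS : Semicopula S) {μ : Set X → ℝ} (hμ : Capacity μ)
    (f : X → ℝ) : 0 ≤ genInt S μ f := by
  have h := le_genInt hS hμ f ⟨0, le_rfl, zero_le_one⟩
  simp only [Icc.coe_eq_zero] at h
  calc (0:ℝ) = S 0 (μ {x | (0:ℝ) ≤ f x}) := (S_zero_left hS (hμ.1 _)).symm
    _ ≤ genInt S μ f := h

end Helpers

theorem stmt4 (S : ℝ → ℝ → ℝ) (hS : Semicopula S) :
    (∀ (X : Type) (μ : Set X → ℝ), Capacity μ → ∀ (A : Set X) (f : X → ℝ),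
        (∀ x, f x ∈ Icc (0:ℝ) 1) → ∀ a ∈ Icc (0:ℝ) 1,
        (∀ x, f x + a ∈ Icc (0:ℝ) 1) →
        genInt S μ (A.indicator (fun x => f x + a)) ≤
          genInt S μ (A.indicator f) + min a (μ A)) ↔
    (∀ x ∈ Icc (0:ℝ) 1, ∀ y ∈ Icc (0:ℝ) 1, ∀ z ∈ Icc (0:ℝ) 1, x + y ≤ 1 →
        S (x + y) z ≤ S x z + min y z) :=  by
  constructor
  · intro H x hx y hy z hz hxy
    classical
    set A : Set Bool := {true} with hAdef
    have hAne : A ≠ (∅ : Set Bool) := by simp [hAdef]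
    have hAnu : A ≠ (univ : Set Bool) := by
      intro h
      have : false ∈ A := h ▸ mem_univ false
      simp [hAdef] at this
    set μ : Set Bool → ℝ := fun B => if B = univ then 1 else if B = ∅ then 0 else z with hμdef
    have hμA : μ A = z := by
      show (if A = univ then 1 else if A = ∅ then 0 else z) = z
      rw [if_neg hAnu, if_neg hAne]
    have hμuniv : μ (univ : Set Bool) = 1 := by
      show (if (univ : Set Bool) = univ then (1:ℝ) else if (univ : Set Bool) = ∅ then 0 else z) = 1
      rw [if_pos rfl]
    have hμempty : μ (∅ : Set Bool) = 0 := by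
      show (if (∅ : Set Bool) = univ then (1:ℝ) else if (∅ : Set Bool) = (∅ : Set Bool) then 0 else z) = 0
      rw [if_neg Set.empty_ne_univ, if_pos rfl]
    have hbounds : ∀ B : Set Bool, μ B ∈ Icc (0:ℝ) 1 := by
      intro B
      show (if B = univ then (1:ℝ) else if B = ∅ then 0 else z) ∈ Icc (0:ℝ) 1
      split_ifs with h1 h2
      · exact ⟨zero_le_one, le_rfl⟩
      · exact ⟨le_rfl, zero_le_one⟩
      · exact hz
    have hCap : Capacity μ := by
      refine ⟨hbounds, ?_, hμempty, hμuniv⟩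
      intro B C hBC
      by_cases hC : C = univ
      · rw [hC, hμuniv]; exact (hbounds B).2
      · by_cases hB : B = ∅
        · rw [hB, hμempty]; exact (hbounds C).1
        · have hBu : B ≠ univ := by
            intro h; exact hC (univ_subset_iff.mp (h ▸ hBC))
          have hCne : C ≠ ∅ := by
            intro h
            exact hB (subset_empty_iff.mp (h ▸ hBC))
          show (if B = univ then (1:ℝ) else if B = ∅ then 0 else z) ≤
            (if C = univ then (1:ℝ) else if C = ∅ then 0 else z)
          rw [if_neg hBu, if_neg hB, if_neg hC, if_neg hCne]
    have key := H Bool μ hCap A (fun _ => x) (fun _ => hx) y hy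
      (fun _ => ⟨by linarith [hx.1, hy.1], hxy⟩)
    rw [hμA] at key
    -- lower bound for LHS
    by_cases hxy0 : x + y = 0
    · have hx0 : x = 0 := by linarith [hx.1, hy.1]
      have hy0 : y = 0 := by linarith [hx.1, hy.1]
      rw [hxy0, hx0, hy0, S_zero_left hS hz]
      simp [min_eq_left hz.1]
    · have hxypos : 0 < x + y := lt_of_le_of_ne (by linarith [hx.1, hy.1]) (Ne.symm hxy0)
      have hlow : S (x + y) z ≤ genInt S μ (A.indicator (fun b => x + y)) := by
        have hset : {b : Bool | x + y ≤ A.indicator (fun _ => x + y) b} = A := by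
          ext b
          cases b <;> simp [hAdef, Set.indicator_apply] <;> linarith
        have h := le_genInt hS hCap (A.indicator (fun _ => x + y))
          ⟨x + y, le_of_lt hxypos, hxy⟩
        simpa [hset, hμA] using h
      have hup : genInt S μ (A.indicator (fun _ => x)) ≤ S x z := by
        apply genInt_le
        rintro ⟨t, ht0, ht1⟩
        simp only
        have hSxz0 := (scop_mem hS hx hz).1
        rcases eq_or_lt_of_le ht0 with h0 | h0
        · rw [← h0, S_zero_left hS (hbounds _)]
          exact hSxz0
        · by_cases htx : t ≤ x
          · have hset : {b : Bool | t ≤ A.indicator (fun _ => x) b} = A := by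
              ext b
              cases b <;> simp [hAdef, Set.indicator_apply] <;> linarith
            rw [hset, hμA]
            exact hS.2.2.1 z hz t ⟨ht0, ht1⟩ x hx htx
          · have hset : {b : Bool | t ≤ A.indicator (fun _ => x) b} = (∅ : Set Bool) := by
              ext b
              cases b <;> simp [hAdef, Set.indicator_apply] <;> linarith
            rw [hset, hμempty, S_zero_right hS ⟨ht0, ht1⟩]
            exact hSxz0
      calc S (x + y) z ≤ genInt S μ (A.indicator (fun b => x + y)) := hlow
        _ ≤ genInt S μ (A.indicator (fun _ => x)) + min y z := key
        _ ≤ S x z + min y z := by linarith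
  · intro H X μ hμ A f hf a ha hfa
    have hgen0 : 0 ≤ genInt S μ (A.indicator f) := genInt_nonneg hS hμ _
    have hmin0 : 0 ≤ min a (μ A) := le_min ha.1 (hμ.1 A).1
    apply genInt_le
    rintro ⟨t, ht0, ht1⟩
    simp only
    rcases eq_or_lt_of_le ht0 with h0 | h0
    · rw [← h0, S_zero_left hS (hμ.1 _)]
      linarith
    · by_cases hta : t ≤ a
      · have hset : {x : X | t ≤ A.indicator (fun x => f x + a) x} = A := by
          ext x
          simp only [mem_setOf_eq]
          by_cases hx : x ∈ A
          · rw [indicator_of_mem hx]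
            simp only [iff_true_intro hx, iff_true]
            linarith [(hf x).1]
          · rw [indicator_of_notMem hx]
            simp only [iff_false_intro hx, iff_false, not_le]
            linarith
        rw [hset]
        have := H 0 ⟨le_rfl, zero_le_one⟩ t ⟨le_of_lt h0, ht1⟩ (μ A) (hμ.1 A)
          (by linarith)
        rw [zero_add, S_zero_left hS (hμ.1 A), zero_add] at this
        have hminle : min t (μ A) ≤ min a (μ A) := min_le_min hta le_rfl
        linarith
      · push_neg at hta
        set B : Set X := {x | t - a ≤ A.indicator f x} with hBdef
        have hset : {x : X | t ≤ A.indicator (fun x => f x + a) x} = B := by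
          ext x
          simp only [hBdef, mem_setOf_eq]
          by_cases hx : x ∈ A
          · rw [indicator_of_mem hx, indicator_of_mem hx]
            constructor <;> intro h <;> linarith
          · rw [indicator_of_notMem hx, indicator_of_notMem hx]
            constructor <;> intro h <;> linarith
        have hBA : B ⊆ A := by
          intro x hxB
          by_contra hxA
          have : A.indicator f x = 0 := indicator_of_notMem hxA f
          rw [hBdef] at hxB
          simp only [mem_setOf_eq, this] at hxB
          linarith
        rw [hset]
        have hμB := hμ.1 B
        have hkey := H (t - a) ⟨by linarith, by linarith [ha.1]⟩ a ha (μ B) hμB (by linarith)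
        rw [sub_add_cancel] at hkey
        have h1 : S (t - a) (μ B) ≤ genInt S μ (A.indicator f) := by
          have := le_genInt hS hμ (A.indicator f) ⟨t - a, by linarith, by linarith [ha.1]⟩
          simpa [hBdef] using this
        have h2 : min a (μ B) ≤ min a (μ A) := min_le_min le_rfl (hμ.2.1 B A hBA)
        linarith
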